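/- Suppose k11(η) ≠ 0 and let I ⊆ ℝ be an interval. If (φ, Φ) : I → ℝ² is differentiable with φ'(t) = Φ(t) and Φ'(t) = M1(φ(t)) for all t ∈ I, and |φ(t)| ≤ α for all t ∈ I, then the pendulum energy E(t) = Φ(t)²/2 − (1/2)·cos(2·φ(t)) is constant on I. -/
import Mathlib


open Real

/-- Solar-radiation-pressure torque coefficient `k11`. -/
noncomputable def k11 (w mb ms d α η : ℝ) : ℝ :=
  Real.sin α * (2 * d * mb * (2 * η * Real.cos (2 * α) + η + 1) +
    w * (mb + ms) * (Real.cos α - η * Real.cos (3 * α)))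

/-- Torque coefficient `k20`. -/
noncomputable def k20 (w mb ms d α η : ℝ) : ℝ :=
  Real.sin α ^ 2 * (4 * d * η * mb * Real.cos α +
    w * (mb + ms) * (1 - η * Real.cos (2 * α)))

/-- Torque coefficient `k02`. -/
noncomputable def k02 (w mb ms d α η : ℝ) : ℝ :=
  Real.cos α * (2 * d * mb * (η * Real.cos (2 * α) + 1) +
    η * w * (mb + ms) * Real.sin α * Real.sin (2 * α))

/-- Scaled torque produced by panel `P₊`. -/
noncomputable def M0plus (w mb ms d α η : ℝ) (ψ : ℝ) : ℝ :=
  -(1 / 2) * Real.sin (2 * ψ)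
    + (k20 w mb ms d α η / k11 w mb ms d α η) * Real.cos ψ ^ 2
    + (k02 w mb ms d α η / k11 w mb ms d α η) * Real.sin ψ ^ 2

/-- Scaled torque produced by panel `P₋`. -/
noncomputable def M0minus (w mb ms d α η : ℝ) (ψ : ℝ) : ℝ :=
  -(1 / 2) * Real.sin (2 * ψ)
    - (k20 w mb ms d α η / k11 w mb ms d α η) * Real.cos ψ ^ 2
    - (k02 w mb ms d α η / k11 w mb ms d α η) * Real.sin ψ ^ 2

/-- Piecewise scaled torque `M1`. -/
noncomputable def M1 (w mb ms d α η : ℝ) (ψ : ℝ) : ℝ :=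
  Set.indicator (Set.Icc (-α) (Real.pi - α)) (M0minus w mb ms d α η) ψ +
  Set.indicator (Set.Icc (-Real.pi + α) α) (M0plus w mb ms d α η) ψ

theorem stmt12 (w mb ms d α η : ℝ) (hw : 0 < w) (hmb : 0 < mb) (hms : 0 < ms)
    (hα : α ∈ Set.Ioo 0 (π / 2)) (hη : η ∈ Set.Ioo (0:ℝ) 1)
    (hk : k11 w mb ms d α η ≠ 0)
    (I : Set ℝ) (hI : I.OrdConnected) (φ Φ : ℝ → ℝ)
    (hφ : ∀ t ∈ I, HasDerivAt φ (Φ t) t)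
    (hΦ : ∀ t ∈ I, HasDerivAt Φ (M1 w mb ms d α η (φ t)) t)
    (hbound : ∀ t ∈ I, |φ t| ≤ α) :
    ∀ s ∈ I, ∀ t ∈ I,
      Φ s ^ 2 / 2 - (1 / 2) * Real.cos (2 * φ s) =
      Φ t ^ 2 / 2 - (1 / 2) * Real.cos (2 * φ t) := by

  have hπ : 0 < π := Real.pi_pos
  obtain ⟨hα0, hα2⟩ := hα
  have key : ∀ ψ : ℝ, |ψ| ≤ α → M1 w mb ms d α η ψ = -Real.sin (2 * ψ) := by
    intro ψ hψ
    rw [abs_le] at hψ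
    have h1 : ψ ∈ Set.Icc (-α) (Real.pi - α) := by
      constructor
      · exact hψ.1
      · linarith [hψ.2]
    have h2 : ψ ∈ Set.Icc (-Real.pi + α) α := by
      constructor
      · linarith [hψ.1]
      · exact hψ.2
    rw [M1, Set.indicator_of_mem h1, Set.indicator_of_mem h2, M0minus, M0plus]
    ring
  set E : ℝ → ℝ := fun t => Φ t ^ 2 / 2 - (1 / 2) * Real.cos (2 * φ t) with hE
  have hEderiv : ∀ x ∈ I, HasDerivAt E 0 x := by
    intro x hx
    have hA : HasDerivAt (fun t => Φ t ^ 2 / 2)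
        (2 * Φ x ^ 1 * M1 w mb ms d α η (φ x) / 2) x :=
      ((hΦ x hx).pow 2).div_const 2
    have hB : HasDerivAt (fun t => (1 / 2) * Real.cos (2 * φ t))
        ((1 / 2) * (-Real.sin (2 * φ x) * (2 * Φ x))) x := by
      have hin : HasDerivAt (fun t => 2 * φ t) (2 * Φ x) x := (hφ x hx).const_mul 2
      exact ((Real.hasDerivAt_cos (2 * φ x)).comp x hin).const_mul (1 / 2)
    have h := hA.sub hB
    have hzero : 2 * Φ x ^ 1 * M1 w mb ms d α η (φ x) / 2 -
        (1 / 2) * (-Real.sin (2 * φ x) * (2 * Φ x)) = 0 := by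
      rw [key (φ x) (hbound x hx)]; ring
    rw [hzero] at h
    exact h
  have main : ∀ a ∈ I, ∀ b ∈ I, a ≤ b → E a = E b := by
    intro a ha b hb hab
    have hsub : Set.Icc a b ⊆ I := hI.out ha hb
    have hcont : ContinuousOn E (Set.Icc a b) := fun x hx =>
      (hEderiv x (hsub hx)).continuousAt.continuousWithinAt
    have hder : ∀ x ∈ Set.Ico a b, HasDerivWithinAt E 0 (Set.Ici x) x := fun x hx =>
      (hEderiv x (hsub ⟨hx.1, hx.2.le⟩)).hasDerivWithinAt
    exact (constant_of_has_deriv_right_zero hcont hder b ⟨hab, le_rfl⟩).symm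
  intro s hs t ht
  rcases le_total s t with h | h
  · exact main s hs t ht h
  · exact (main t ht s hs h).symm
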